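/- Correctness of the dynamic-programming recurrence for the SIPP: define F(i,j,k), for integers i,j ≥ 1 and k ≥ 0, as the minimum of H(A) over all i×j RC layouts A with W(A) ≤ k (F(i,j,k) = +∞ if no such layout exists), with the conventions F(i,j,k) = +∞ whenever i ≤ 0 or j ≤ 0 or k < l_1. Then F(1,1,k) = l_1 for all k ≥ l_1, and for all i,j with i+j ≥ 3 and all k, F(i,j,k) = min{ F(i−1,j,k) + l_{ij−j+1}, F(i,j−1, k − l_{ij−i+1}) }. -/

import Mathlib

/-- A `p × q` layout: a matrix whose entries are exactly the integers `1, …, p*q`. -/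
def IsLayout (p q : ℕ) (A : Fin p → Fin q → ℕ) : Prop :=
  Function.Injective (fun ij : Fin p × Fin q => A ij.1 ij.2) ∧
  (Set.range fun ij : Fin p × Fin q => A ij.1 ij.2) = Set.Icc 1 (p * q)

/-- Width of a layout with respect to side lengths `l`. -/
def layW (l : ℕ → ℕ) {p q : ℕ} (A : Fin p → Fin q → ℕ) : ℕ :=
  ∑ j : Fin q, Finset.univ.sup fun i : Fin p => l (A i j)

/-- Height of a layout with respect to side lengths `l`. -/
def layH (l : ℕ → ℕ) {p q : ℕ} (A : Fin p → Fin q → ℕ) : ℕ :=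
  ∑ i : Fin p, Finset.univ.sup fun j : Fin q => l (A i j)

/-- RC layouts: obtainable from the 1×1 base layout by add-row and add-column operations. -/
inductive IsRC : {p q : ℕ} → (Fin p → Fin q → ℕ) → Prop
  | base : IsRC (fun (_ : Fin 1) (_ : Fin 1) => 1)
  | addRow {p q : ℕ} {A : Fin p → Fin q → ℕ} (h : IsRC A) :
      IsRC (fun (i : Fin (p + 1)) (j : Fin q) =>
        if hi : (i : ℕ) < p then A ⟨i, hi⟩ j else p * q + (j : ℕ) + 1)
  | addCol {p q : ℕ} {A : Fin p → Fin q → ℕ} (h : IsRC A) :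
      IsRC (fun (i : Fin p) (j : Fin (q + 1)) =>
        if hj : (j : ℕ) < q then A i ⟨j, hj⟩ else p * q + (i : ℕ) + 1)

/-- `F(i,j,k)`: the minimum height of an `i × j` RC layout of width at most `k`
(`⊤` if no such layout exists). -/
noncomputable def Fdp (l : ℕ → ℕ) (i j k : ℕ) : ℕ∞ :=
  sInf {h : ℕ∞ | ∃ A : Fin i → Fin j → ℕ, IsRC A ∧ layW l A ≤ k ∧ h = (layH l A : ℕ∞)}

/- ### Auxiliary lemmas -/

lemma sup_univ_castSucc' (n : ℕ) (f : Fin (n+1) → ℕ) :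
    Finset.univ.sup f = (Finset.univ.sup fun i : Fin n => f i.castSucc) ⊔ f (Fin.last n) := by
  apply le_antisymm
  · refine Finset.sup_le fun i _ => ?_
    induction i using Fin.lastCases with
    | last => exact le_sup_right
    | cast i => exact le_trans (Finset.le_sup (f := fun i : Fin n => f i.castSucc)
        (Finset.mem_univ i)) le_sup_left
  · exact sup_le (Finset.sup_le fun i _ => Finset.le_sup (Finset.mem_univ i.castSucc))
      (Finset.le_sup (Finset.mem_univ (Fin.last n)))

lemma sInf_add_const (S : Set ℕ∞) (c : ℕ∞) : sInf S + c = sInf ((· + c) '' S) := by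
  have gc : GaloisConnection (· - c) (· + c) := fun a b => tsub_le_iff_right
  rw [gc.u_sInf, sInf_image]

/-- Structure facts about RC layouts. -/
lemma rc_struct : ∀ {p q : ℕ} {A : Fin p → Fin q → ℕ}, IsRC A →
    0 < p ∧ 0 < q ∧ (∀ i j, 1 ≤ A i j ∧ A i j ≤ p * q) ∧
      ∀ (hp : 0 < p) (hq : 0 < q), A ⟨0, hp⟩ ⟨0, hq⟩ = 1 := by
  intro p q A h
  induction h with
  | base => exact ⟨one_pos, one_pos, fun i j => by constructor <;> simp, fun _ _ => rfl⟩
  | @addRow p q A h ih =>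
    obtain ⟨hp, hq, hb, h0⟩ := ih
    refine ⟨Nat.succ_pos p, hq, ?_, ?_⟩
    · intro i j
      dsimp only
      split
      · exact ⟨(hb _ j).1, le_trans (hb _ j).2 (by nlinarith)⟩
      · have hj := j.isLt
        have : (p + 1) * q = p * q + q := by ring
        omega
    · intro _ _
      dsimp only
      rw [dif_pos hp]
      exact h0 hp hq
  | @addCol p q A h ih =>
    obtain ⟨hp, hq, hb, h0⟩ := ih
    refine ⟨hp, Nat.succ_pos q, ?_, ?_⟩
    · intro i j
      dsimp only
      split
      · exact ⟨(hb i _).1, le_trans (hb i _).2 (by nlinarith)⟩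
      · have hi := i.isLt
        have : p * (q + 1) = p * q + p := by ring
        omega
    · intro _ _
      dsimp only
      rw [dif_pos hq]
      exact h0 hp hq

lemma l1_le_layW (l : ℕ → ℕ) {p q : ℕ} {A : Fin p → Fin q → ℕ} (h : IsRC A) :
    l 1 ≤ layW l A := by
  obtain ⟨hp, hq, _, h0⟩ := rc_struct h
  have h1 : l 1 ≤ Finset.univ.sup fun i : Fin p => l (A i ⟨0, hq⟩) := by
    have h2 : l (A ⟨0, hp⟩ ⟨0, hq⟩) ≤ Finset.univ.sup fun i : Fin p => l (A i ⟨0, hq⟩) :=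
      Finset.le_sup (f := fun i : Fin p => l (A i ⟨0, hq⟩)) (Finset.mem_univ (⟨0, hp⟩ : Fin p))
    rwa [h0 hp hq] at h2
  exact h1.trans (Finset.single_le_sum (f := fun j : Fin q =>
    Finset.univ.sup fun i : Fin p => l (A i j)) (fun _ _ => Nat.zero_le _)
    (Finset.mem_univ (⟨0, hq⟩ : Fin q)))

section Ext
variable (l : ℕ → ℕ) (hl : ∀ a b, 1 ≤ a → a ≤ b → l b ≤ l a)
variable {p q : ℕ} {A : Fin p → Fin q → ℕ}
include hl

lemma layW_addRow (h : IsRC A) :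
    layW l (fun (i : Fin (p + 1)) (j : Fin q) =>
        if hi : (i : ℕ) < p then A ⟨i, hi⟩ j else p * q + (j : ℕ) + 1) = layW l A := by
  obtain ⟨hp, hq, hb, -⟩ := rc_struct h
  unfold layW
  refine Finset.sum_congr rfl fun j _ => ?_
  rw [sup_univ_castSucc']
  have e1 : ∀ i : Fin p,
      (fun i' : Fin (p+1) => l (if hi : (i' : ℕ) < p then A ⟨i', hi⟩ j else p * q + (j : ℕ) + 1))
        i.castSucc = l (A i j) := by
    intro i; simp [i.isLt]
  simp only [e1]
  have e2 : l (if hi : ((Fin.last p : Fin (p+1)) : ℕ) < p then A ⟨_, hi⟩ j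
      else p * q + (j : ℕ) + 1) = l (p * q + (j : ℕ) + 1) := by simp
  rw [e2, sup_eq_left.mpr]
  have h3 : l (A ⟨0, hp⟩ j) ≤ Finset.univ.sup fun i : Fin p => l (A i j) :=
    Finset.le_sup (f := fun i : Fin p => l (A i j)) (Finset.mem_univ (⟨0, hp⟩ : Fin p))
  exact le_trans (hl (A ⟨0, hp⟩ j) (p * q + (j : ℕ) + 1) (hb _ j).1
    (by have := (hb ⟨0, hp⟩ j).2; omega)) h3

lemma layH_addRow (h : IsRC A) :
    layH l (fun (i : Fin (p + 1)) (j : Fin q) =>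
        if hi : (i : ℕ) < p then A ⟨i, hi⟩ j else p * q + (j : ℕ) + 1)
      = layH l A + l (p * q + 1) := by
  obtain ⟨hp, hq, hb, -⟩ := rc_struct h
  unfold layH
  rw [Fin.sum_univ_castSucc]
  congr 1
  · refine Finset.sum_congr rfl fun i _ => ?_
    refine Finset.sup_congr rfl fun j _ => ?_
    simp [i.isLt]
  · have e2 : ∀ j : Fin q, l (if hi : ((Fin.last p : Fin (p+1)) : ℕ) < p then A ⟨_, hi⟩ j
        else p * q + (j : ℕ) + 1) = l (p * q + (j : ℕ) + 1) := by simp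
    simp only [e2]
    apply le_antisymm
    · exact Finset.sup_le fun j _ => hl (p * q + 1) (p * q + (j : ℕ) + 1) (by omega) (by omega)
    · have := Finset.le_sup (f := fun j : Fin q => l (p * q + (j : ℕ) + 1))
        (Finset.mem_univ ⟨0, hq⟩)
      simpa using this

lemma layH_addCol (h : IsRC A) :
    layH l (fun (i : Fin p) (j : Fin (q + 1)) =>
        if hj : (j : ℕ) < q then A i ⟨j, hj⟩ else p * q + (i : ℕ) + 1) = layH l A := by
  obtain ⟨hp, hq, hb, -⟩ := rc_struct h
  unfold layH
  refine Finset.sum_congr rfl fun i _ => ?_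
  rw [sup_univ_castSucc']
  have e1 : ∀ j : Fin q,
      (fun j' : Fin (q+1) => l (if hj : (j' : ℕ) < q then A i ⟨j', hj⟩ else p * q + (i : ℕ) + 1))
        j.castSucc = l (A i j) := by
    intro j; simp [j.isLt]
  simp only [e1]
  have e2 : l (if hj : ((Fin.last q : Fin (q+1)) : ℕ) < q then A i ⟨_, hj⟩
      else p * q + (i : ℕ) + 1) = l (p * q + (i : ℕ) + 1) := by simp
  rw [e2, sup_eq_left.mpr]
  have h3 : l (A i ⟨0, hq⟩) ≤ Finset.univ.sup fun j : Fin q => l (A i j) :=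
    Finset.le_sup (f := fun j : Fin q => l (A i j)) (Finset.mem_univ (⟨0, hq⟩ : Fin q))
  exact le_trans (hl (A i ⟨0, hq⟩) (p * q + (i : ℕ) + 1) (hb i _).1
    (by have := (hb i ⟨0, hq⟩).2; omega)) h3

lemma layW_addCol (h : IsRC A) :
    layW l (fun (i : Fin p) (j : Fin (q + 1)) =>
        if hj : (j : ℕ) < q then A i ⟨j, hj⟩ else p * q + (i : ℕ) + 1)
      = layW l A + l (p * q + 1) := by
  obtain ⟨hp, hq, hb, -⟩ := rc_struct h
  unfold layW
  rw [Fin.sum_univ_castSucc]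
  congr 1
  · refine Finset.sum_congr rfl fun j _ => ?_
    refine Finset.sup_congr rfl fun i _ => ?_
    simp [j.isLt]
  · have e2 : ∀ i : Fin p, l (if hj : ((Fin.last q : Fin (q+1)) : ℕ) < q then A i ⟨_, hj⟩
        else p * q + (i : ℕ) + 1) = l (p * q + (i : ℕ) + 1) := by simp
    simp only [e2]
    apply le_antisymm
    · exact Finset.sup_le fun i _ => hl (p * q + 1) (p * q + (i : ℕ) + 1) (by omega) (by omega)
    · have := Finset.le_sup (f := fun i : Fin p => l (p * q + (i : ℕ) + 1))
        (Finset.mem_univ ⟨0, hp⟩)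
      simpa using this

end Ext

theorem sipp_dp_recurrence (l : ℕ → ℕ)
    (hl : ∀ a b, 1 ≤ a → a ≤ b → l b ≤ l a) (hpos : 0 < l 1) :
    (∀ i j k, (i = 0 ∨ j = 0 ∨ k < l 1) → Fdp l i j k = ⊤) ∧
    (∀ k, l 1 ≤ k → Fdp l 1 1 k = (l 1 : ℕ∞)) ∧
    (∀ i j k, 1 ≤ i → 1 ≤ j → 3 ≤ i + j →
      Fdp l i j k =
        min (Fdp l (i - 1) j k + (l (i * j - j + 1) : ℕ∞))
          (if l (i * j - i + 1) ≤ k then Fdp l i (j - 1) (k - l (i * j - i + 1)) else ⊤)) := by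
  refine ⟨?_, ?_, ?_⟩
  · -- degenerate cases
    intro i j k hd
    apply sInf_eq_top.mpr
    rintro h ⟨A, hA, hW, rfl⟩
    exfalso
    obtain ⟨hp, hq, -, -⟩ := rc_struct hA
    rcases hd with rfl | rfl | hk
    · omega
    · omega
    · exact absurd ((l1_le_layW l hA).trans hW) (by omega)
  · -- base case
    intro k hk
    apply le_antisymm
    · refine sInf_le ⟨(fun _ _ => 1), IsRC.base, ?_, ?_⟩
      · simpa [layW] using hk
      · simp [layH]
    · refine le_sInf ?_
      rintro h ⟨A, hA, hW, rfl⟩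
      obtain ⟨-, -, -, h0⟩ := rc_struct hA
      have hA00 : A 0 0 = 1 := h0 one_pos one_pos
      have : layH l A = l 1 := by
        simp [layH, show ∀ i j, A i j = 1 from fun i j => by
          rwa [Subsingleton.elim i 0, Subsingleton.elim j 0]]
      rw [this]
  · -- recurrence
    intro i j k hi hj hij
    obtain ⟨p, rfl⟩ : ∃ p, i = p + 1 := ⟨i - 1, by omega⟩
    obtain ⟨q, rfl⟩ : ∃ q, j = q + 1 := ⟨j - 1, by omega⟩
    have hpq : 1 ≤ p + q := by omega
    have a1 : (p + 1) * (q + 1) - (q + 1) + 1 = p * (q + 1) + 1 := by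
      rw [Nat.succ_mul, Nat.add_sub_cancel]
    have a2 : (p + 1) * (q + 1) - (p + 1) + 1 = (p + 1) * q + 1 := by
      rw [Nat.mul_succ, Nat.add_sub_cancel]
    rw [a1, a2]
    simp only [Nat.add_sub_cancel]
    set c1 := l (p * (q + 1) + 1) with hc1
    set c2 := l ((p + 1) * q + 1) with hc2
    apply le_antisymm
    · apply le_min
      · -- Fdp ≤ Fdp p (q+1) k + c1
        rw [Fdp, Fdp, sInf_add_const]
        refine le_sInf ?_
        rintro x ⟨h, ⟨B, hB, hWB, rfl⟩, rfl⟩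
        refine sInf_le ⟨_, IsRC.addRow hB, ?_, ?_⟩
        · rw [layW_addRow l hl hB]; exact hWB
        · dsimp only; rw [layH_addRow l hl hB]; push_cast; ring
      · -- Fdp ≤ second branch
        split_ifs with hk2
        · refine le_sInf ?_
          rintro h ⟨B, hB, hWB, rfl⟩
          refine sInf_le ⟨_, IsRC.addCol hB, ?_, ?_⟩
          · rw [layW_addCol l hl hB]; omega
          · rw [layH_addCol l hl hB]
        · exact le_top
    · refine le_sInf ?_
      rintro h ⟨A, hA, hW, rfl⟩
      cases hA with
      | base => omega
      | @addRow p' q' B hB =>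
        refine le_trans (min_le_left _ _) ?_
        have hWB : layW l B ≤ k := by rwa [layW_addRow l hl hB] at hW
        rw [layH_addRow l hl hB]
        have : Fdp l p (q + 1) k ≤ (layH l B : ℕ∞) := sInf_le ⟨B, hB, hWB, rfl⟩
        calc Fdp l p (q + 1) k + (c1 : ℕ∞) ≤ (layH l B : ℕ∞) + (c1 : ℕ∞) :=
              add_le_add_left this _
          _ = ((layH l B + c1 : ℕ) : ℕ∞) := by push_cast; ring
      | @addCol p' q' B hB =>
        have hWB : layW l B + c2 ≤ k := by rwa [layW_addCol l hl hB] at hW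
        have hk2 : c2 ≤ k := by omega
        rw [if_pos hk2]
        refine le_trans (min_le_right _ _) ?_
        rw [layH_addCol l hl hB]
        exact sInf_le ⟨B, hB, by omega, rfl⟩
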